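/- Let f : R^d → R be twice differentiable with H-Lipschitz Hessian (in spectral norm) and suppose ∇²f(x*) ⪰ μI with μ > 0 at a point x* satisfying ∇f(x*) = 0. Then the Newton Star iteration x^{k+1} = x^k − [∇²f(x*)]^{-1} ∇f(x^k) satisfies ‖x^{k+1} − x*‖ ≤ (H/(2μ))‖x^k − x*‖² for all k ≥ 0 and any x^0 ∈ R^d. -/

import Mathlib

open scoped RealInnerProductSpace

lemma taylor_aux {E : Type*} [NormedAddCommGroup E] [InnerProductSpace ℝ E] [CompleteSpace E]
    (g : E → E) (Hess : E → (E →L[ℝ] E)) (H : ℝ)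
    (hHess : ∀ x, HasFDerivAt g (Hess x) x)
    (hLip : ∀ x y, ‖Hess x - Hess y‖ ≤ H * ‖x - y‖)
    (x y : E) : ‖g y - g x - Hess x (y - x)‖ ≤ H / 2 * ‖y - x‖ ^ 2 := by
  set v := y - x with hv
  have hHc : Continuous Hess := by
    refine (LipschitzWith.of_dist_le_mul (K := (max H 0).toNNReal) ?_).continuous
    intro a b
    rw [dist_eq_norm, dist_eq_norm]
    calc ‖Hess a - Hess b‖ ≤ H * ‖a - b‖ := hLip a b
      _ ≤ (max H 0).toNNReal * ‖a - b‖ := by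
          apply mul_le_mul_of_nonneg_right _ (norm_nonneg _)
          rw [Real.coe_toNNReal _ (le_max_right _ _)]
          exact le_max_left _ _
  have hcurve : ∀ t : ℝ, HasDerivAt (fun t : ℝ => g (x + t • v)) (Hess (x + t • v) v) t := by
    intro t
    have h1 : HasDerivAt (fun t : ℝ => x + t • v) v t := by
      simpa using ((hasDerivAt_id t).smul_const v).const_add x
    exact (hHess (x + t • v)).comp_hasDerivAt t h1
  have hcont : Continuous fun t : ℝ => Hess (x + t • v) v := by
    exact (ContinuousLinearMap.apply ℝ E v).continuous.comp
      (hHc.comp (continuous_const.add (continuous_id.smul continuous_const)))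
  have hint : (∫ t in (0:ℝ)..1, Hess (x + t • v) v) = g y - g x := by
    rw [intervalIntegral.integral_eq_sub_of_hasDerivAt
      (fun t _ => hcurve t) (hcont.intervalIntegrable 0 1)]
    have hy : x + v = y := by simp [hv]
    simp [hy]
  have hconst : (∫ t in (0:ℝ)..1, Hess x v) = Hess x v := by simp
  have heq : g y - g x - Hess x v = ∫ t in (0:ℝ)..1, (Hess (x + t • v) v - Hess x v) := by
    rw [intervalIntegral.integral_sub (hcont.intervalIntegrable 0 1)
      intervalIntegrable_const, hint, hconst]
  rcases eq_or_ne y x with hyx | hyx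
  · simp [hyx, hv]
  have hH : 0 ≤ H := by
    have h1 := hLip y x
    have h2 : (0:ℝ) < ‖y - x‖ := by
      rw [norm_pos_iff]; exact sub_ne_zero.mpr hyx
    nlinarith [norm_nonneg (Hess y - Hess x)]
  rw [heq]
  have hbound : ∀ t ∈ Set.Icc (0:ℝ) 1,
      ‖Hess (x + t • v) v - Hess x v‖ ≤ H * ‖v‖ ^ 2 * t := by
    intro t ht
    have h1 : ‖Hess (x + t • v) v - Hess x v‖ ≤ ‖Hess (x + t • v) - Hess x‖ * ‖v‖ := by
      simpa using (Hess (x + t • v) - Hess x).le_opNorm v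
    have h2 : ‖Hess (x + t • v) - Hess x‖ ≤ H * (t * ‖v‖) := by
      have := hLip (x + t • v) x
      simpa [norm_smul, abs_of_nonneg ht.1] using this
    calc ‖Hess (x + t • v) v - Hess x v‖ ≤ (H * (t * ‖v‖)) * ‖v‖ := by
          refine h1.trans (mul_le_mul_of_nonneg_right h2 (norm_nonneg _))
      _ = H * ‖v‖ ^ 2 * t := by ring
  have hval : (∫ t in (0:ℝ)..1, H * ‖v‖ ^ 2 * t) = H / 2 * ‖v‖ ^ 2 := by
    rw [intervalIntegral.integral_const_mul, integral_id]
    ring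
  calc ‖∫ t in (0:ℝ)..1, (Hess (x + t • v) v - Hess x v)‖
      ≤ |∫ t in (0:ℝ)..1, H * ‖v‖ ^ 2 * t| := by
        apply intervalIntegral.norm_integral_le_abs_of_norm_le
        · filter_upwards [MeasureTheory.ae_restrict_mem measurableSet_Ioc] with t ht
          rw [Set.uIoc_of_le (by norm_num : (0:ℝ) ≤ 1)] at ht
          exact hbound t ⟨le_of_lt ht.1, ht.2⟩
        · exact ((continuous_const.mul continuous_id).intervalIntegrable 0 1)
    _ = H / 2 * ‖v‖ ^ 2 := by
        rw [hval, abs_of_nonneg (by positivity)]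

/-- local quadratic convergence of Newton Star,
`x^{k+1} = x^k − [∇²f(x*)]⁻¹ ∇f(x^k)`, for a twice differentiable `f` with `H`-Lipschitz
Hessian (in operator norm) and `∇²f(x*) ⪰ μI`, `∇f(x*) = 0`. -/
theorem newton_star_quadratic_rate {d : ℕ}
    (f : EuclideanSpace ℝ (Fin d) → ℝ)
    (g : EuclideanSpace ℝ (Fin d) → EuclideanSpace ℝ (Fin d))
    (Hess : EuclideanSpace ℝ (Fin d) →
      (EuclideanSpace ℝ (Fin d) →L[ℝ] EuclideanSpace ℝ (Fin d)))
    (H μ : ℝ) (hμ : 0 < μ) (xstar : EuclideanSpace ℝ (Fin d))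
    (hgrad : ∀ x, HasGradientAt f (g x) x)
    (hHess : ∀ x, HasFDerivAt g (Hess x) x)
    (hLip : ∀ x y, ‖Hess x - Hess y‖ ≤ H * ‖x - y‖)
    (hpos : ∀ v, μ * ‖v‖ ^ 2 ≤ ⟪Hess xstar v, v⟫)
    (hstar : g xstar = 0)
    (Hinv : EuclideanSpace ℝ (Fin d) →L[ℝ] EuclideanSpace ℝ (Fin d))
    (hinv1 : Hinv.comp (Hess xstar) = ContinuousLinearMap.id ℝ _)
    (hinv2 : (Hess xstar).comp Hinv = ContinuousLinearMap.id ℝ _)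
    (x : ℕ → EuclideanSpace ℝ (Fin d))
    (hiter : ∀ k, x (k + 1) = x k - Hinv (g (x k))) :
    ∀ k, ‖x (k + 1) - xstar‖ ≤ H / (2 * μ) * ‖x k - xstar‖ ^ 2 := by
  have hlow : ∀ v, μ * ‖v‖ ≤ ‖Hess xstar v‖ := by
    intro v
    rcases eq_or_ne v 0 with rfl | hv
    · simp
    · have h1 := hpos v
      have h2 := real_inner_le_norm (Hess xstar v) v
      have h3 : (0:ℝ) < ‖v‖ := norm_pos_iff.mpr hv
      nlinarith
  have hinvb : ∀ w, ‖Hinv w‖ ≤ ‖w‖ / μ := by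
    intro w
    have h1 := hlow (Hinv w)
    have h2 : Hess xstar (Hinv w) = w := by
      have := ContinuousLinearMap.ext_iff.mp hinv2 w
      simpa using this
    rw [h2] at h1
    rw [le_div_iff₀ hμ]
    linarith
  intro k
  have hT := taylor_aux g Hess H hHess hLip xstar (x k)
  rw [hstar, sub_zero] at hT
  have heq : x (k + 1) - xstar = Hinv (Hess xstar (x k - xstar) - g (x k)) := by
    have h2 : Hinv (Hess xstar (x k - xstar)) = x k - xstar := by
      have := ContinuousLinearMap.ext_iff.mp hinv1 (x k - xstar)
      simpa using this
    rw [hiter k, map_sub, h2]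
    abel
  rw [heq]
  calc ‖Hinv (Hess xstar (x k - xstar) - g (x k))‖
      ≤ ‖Hess xstar (x k - xstar) - g (x k)‖ / μ := hinvb _
    _ = ‖g (x k) - Hess xstar (x k - xstar)‖ / μ := by rw [norm_sub_rev]
    _ ≤ (H / 2 * ‖x k - xstar‖ ^ 2) / μ := by
        gcongr
    _ = H / (2 * μ) * ‖x k - xstar‖ ^ 2 := by field_simp
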